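/- Let G be the group with presentation ⟨ρ₀, ρ₁, ρ₂ | ρ₀², ρ₁², ρ₂², (ρ₀ρ₂)²⟩ (the free product of three groups of order 2 with the added relation that ρ₀ and ρ₂ commute). Then the commutator subgroup G' is generated by the three elements [ρ₀, ρ₁], [ρ₁, ρ₂], and [ρ₀, ρ₁]^{ρ₂}. -/

import Mathlib

open FreeGroup in
/-- The relators of the presentation `⟨ρ₀, ρ₁, ρ₂ | ρ₀², ρ₁², ρ₂², (ρ₀ρ₂)²⟩`. -/
def Wrels : Set (FreeGroup (Fin 3)) :=
  {(of 0) ^ 2, (of 1) ^ 2, (of 2) ^ 2, (of 0 * of 2) ^ 2}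

/-- If a group is generated by pairwise commuting elements, it is commutative. -/
lemma aux_commute_all {G : Type*} [Group G] {s : Set G} (hs : Subgroup.closure s = ⊤)
    (h : ∀ x ∈ s, ∀ y ∈ s, Commute x y) (x y : G) : Commute x y := by
  have hx : x ∈ Subgroup.closure s := hs ▸ Subgroup.mem_top x
  have hy : y ∈ Subgroup.closure s := hs ▸ Subgroup.mem_top y
  induction hx, hy using Subgroup.closure_induction₂ with
  | mem a b ha hb => exact h a ha b hb
  | one_left => exact Commute.one_left _
  | one_right => exact Commute.one_right _
  | mul_left _ _ _ _ _ _ h1 h2 => exact h1.mul_left h2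
  | mul_right _ _ _ _ _ _ h1 h2 => exact h1.mul_right h2
  | inv_left _ _ _ _ h1 => exact h1.inv_left
  | inv_right _ _ _ _ h1 => exact h1.inv_right

lemma aux_rel_one {r : FreeGroup (Fin 3)} (hr : r ∈ Wrels) :
    PresentedGroup.mk Wrels r = 1 :=
  (QuotientGroup.eq_one_iff r).mpr (Subgroup.subset_normalClosure hr)

lemma aux_sq (i : Fin 3) :
    (PresentedGroup.of i : PresentedGroup Wrels) * PresentedGroup.of i = 1 := by
  have h : ((FreeGroup.of i) ^ 2 : FreeGroup (Fin 3)) ∈ Wrels := by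
    fin_cases i
    · exact Or.inl rfl
    · exact Or.inr (Or.inl rfl)
    · exact Or.inr (Or.inr (Or.inl rfl))
  have h1 := aux_rel_one h
  rw [map_pow, sq] at h1
  exact h1

lemma aux_inv (i : Fin 3) :
    (PresentedGroup.of i : PresentedGroup Wrels)⁻¹ = PresentedGroup.of i :=
  inv_eq_of_mul_eq_one_right (aux_sq i)

lemma aux_comm02 :
    (PresentedGroup.of 2 : PresentedGroup Wrels) * PresentedGroup.of 0 =
      PresentedGroup.of 0 * PresentedGroup.of 2 := by
  have h : ((FreeGroup.of 0 * FreeGroup.of 2) ^ 2 : FreeGroup (Fin 3)) ∈ Wrels :=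
    Or.inr (Or.inr (Or.inr rfl))
  have h1 := aux_rel_one h
  rw [map_pow, sq, map_mul] at h1
  have h2 : (PresentedGroup.of 0 : PresentedGroup Wrels) * PresentedGroup.of 2 =
      ((PresentedGroup.of 0 : PresentedGroup Wrels) * PresentedGroup.of 2)⁻¹ :=
    eq_inv_of_mul_eq_one_right h1
  rw [mul_inv_rev, aux_inv, aux_inv] at h2
  exact h2.symm

open scoped commutatorElement

/-- For `G = ⟨ρ₀, ρ₁, ρ₂ | ρ₀², ρ₁², ρ₂², (ρ₀ρ₂)²⟩`, the derived subgroup `G'` is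
generated by `[ρ₀, ρ₁]`, `[ρ₁, ρ₂]` and `[ρ₀, ρ₁]^{ρ₂}`, where `[a, b] = a⁻¹b⁻¹ab`
and `x^g = g⁻¹xg`. -/
theorem derived_of_string_presentation :
    letI ρ : Fin 3 → PresentedGroup Wrels := PresentedGroup.of
    commutator (PresentedGroup Wrels) =
      Subgroup.closure
        {(ρ 0)⁻¹ * (ρ 1)⁻¹ * ρ 0 * ρ 1,
         (ρ 1)⁻¹ * (ρ 2)⁻¹ * ρ 1 * ρ 2,
         (ρ 2)⁻¹ * ((ρ 0)⁻¹ * (ρ 1)⁻¹ * ρ 0 * ρ 1) * ρ 2} := by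
  set G := PresentedGroup Wrels with hG
  set ρ : Fin 3 → G := (PresentedGroup.of : Fin 3 → G) with hρ
  set A : G := (ρ 0)⁻¹ * (ρ 1)⁻¹ * ρ 0 * ρ 1 with hA
  set B : G := (ρ 1)⁻¹ * (ρ 2)⁻¹ * ρ 1 * ρ 2 with hB
  set C : G := (ρ 2)⁻¹ * ((ρ 0)⁻¹ * (ρ 1)⁻¹ * ρ 0 * ρ 1) * ρ 2 with hC
  set H : Subgroup G := Subgroup.closure {A, B, C} with hH
  have hinv : ∀ i : Fin 3, (ρ i)⁻¹ = ρ i := aux_inv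
  have hsq' : ∀ i : Fin 3, ρ i * ρ i = 1 := aux_sq
  have hsq : ∀ (i : Fin 3) (x : G), ρ i * (ρ i * x) = x := by
    intro i x; rw [← mul_assoc, hsq' i, one_mul]
  have hc : ρ 2 * ρ 0 = ρ 0 * ρ 2 := aux_comm02
  have hc' : ∀ x : G, ρ 2 * (ρ 0 * x) = ρ 0 * (ρ 2 * x) := by
    intro x; rw [← mul_assoc, hc, mul_assoc]
  have hAH : A ∈ H := Subgroup.subset_closure (Or.inl rfl)
  have hBH : B ∈ H := Subgroup.subset_closure (Or.inr (Or.inl rfl))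
  have hCH : C ∈ H := Subgroup.subset_closure (Or.inr (Or.inr rfl))
  -- conjugation of the generators of H by the generators of G stays in H
  have conj : ∀ (i : Fin 3) (x : G), x ∈ ({A, B, C} : Set G) → ρ i * x * (ρ i)⁻¹ ∈ H := by
    rintro i x (rfl | rfl | rfl) <;> fin_cases i
    · show ρ 0 * A * (ρ 0)⁻¹ ∈ H
      have e : ρ 0 * A * (ρ 0)⁻¹ = A⁻¹ := by
        rw [hA]; simp [hinv, mul_inv_rev, mul_assoc, hsq, hsq']
      rw [e]; exact inv_mem hAH
    · show ρ 1 * A * (ρ 1)⁻¹ ∈ H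
      have e : ρ 1 * A * (ρ 1)⁻¹ = A⁻¹ := by
        rw [hA]; simp [hinv, mul_inv_rev, mul_assoc, hsq, hsq']
      rw [e]; exact inv_mem hAH
    · show ρ 2 * A * (ρ 2)⁻¹ ∈ H
      have e : ρ 2 * A * (ρ 2)⁻¹ = C := by
        rw [hA, hC]; simp [hinv, mul_assoc]
      rw [e]; exact hCH
    · show ρ 0 * B * (ρ 0)⁻¹ ∈ H
      have e : ρ 0 * B * (ρ 0)⁻¹ = A * B * C⁻¹ := by
        rw [hA, hB, hC]
        simp [hinv, mul_inv_rev, mul_assoc, hsq, hsq', hc, hc']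
      rw [e]; exact mul_mem (mul_mem hAH hBH) (inv_mem hCH)
    · show ρ 1 * B * (ρ 1)⁻¹ ∈ H
      have e : ρ 1 * B * (ρ 1)⁻¹ = B⁻¹ := by
        rw [hB]; simp [hinv, mul_inv_rev, mul_assoc, hsq, hsq']
      rw [e]; exact inv_mem hBH
    · show ρ 2 * B * (ρ 2)⁻¹ ∈ H
      have e : ρ 2 * B * (ρ 2)⁻¹ = B⁻¹ := by
        rw [hB]; simp [hinv, mul_inv_rev, mul_assoc, hsq, hsq']
      rw [e]; exact inv_mem hBH
    · show ρ 0 * C * (ρ 0)⁻¹ ∈ H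
      have e : ρ 0 * C * (ρ 0)⁻¹ = C⁻¹ := by
        rw [hC]
        simp [hinv, mul_inv_rev, mul_assoc, hsq, hsq', hc, hc']
      rw [e]; exact inv_mem hCH
    · show ρ 1 * C * (ρ 1)⁻¹ ∈ H
      have e : ρ 1 * C * (ρ 1)⁻¹ = B * C⁻¹ * B⁻¹ := by
        rw [hB, hC]
        simp [hinv, mul_inv_rev, mul_assoc, hsq, hsq', hc, hc']
      rw [e]; exact mul_mem (mul_mem hBH (inv_mem hCH)) (inv_mem hBH)
    · show ρ 2 * C * (ρ 2)⁻¹ ∈ H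
      have e : ρ 2 * C * (ρ 2)⁻¹ = A := by
        rw [hA, hC]
        simp [hinv, mul_inv_rev, mul_assoc, hsq, hsq', hc, hc']
      rw [e]; exact hAH
  -- hence conjugation by a generator maps all of H into H
  have hmapsto : ∀ (i : Fin 3) (x : G), x ∈ H → ρ i * x * (ρ i)⁻¹ ∈ H := by
    intro i x hx
    induction hx using Subgroup.closure_induction with
    | mem y hy => exact conj i y hy
    | one => simpa using one_mem H
    | mul y z _ _ hy hz =>
      have e : ρ i * (y * z) * (ρ i)⁻¹ = (ρ i * y * (ρ i)⁻¹) * (ρ i * z * (ρ i)⁻¹) := by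
        simp [mul_assoc, hinv, hsq]
      rw [e]; exact mul_mem hy hz
    | inv y _ hy =>
      have e : ρ i * y⁻¹ * (ρ i)⁻¹ = (ρ i * y * (ρ i)⁻¹)⁻¹ := by
        group
      rw [e]; exact inv_mem hy
  -- H is normal
  have hnorm : H.Normal := by
    rw [← Subgroup.normalizer_eq_top_iff, eq_top_iff]
    intro x _
    refine PresentedGroup.generated_by Wrels (Subgroup.normalizer (H : Set G)) (fun j => ?_) x
    show ρ j ∈ Subgroup.normalizer (H : Set G)
    rw [Subgroup.mem_normalizer_iff]
    intro h
    constructor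
    · intro hh
      exact hmapsto j h hh
    · intro hh
      have h2 := hmapsto j _ hh
      have e : ρ j * (ρ j * h * (ρ j)⁻¹) * (ρ j)⁻¹ = h := by
        simp [hinv, mul_assoc, hsq, hsq']
      rwa [e] at h2
  haveI := hnorm
  apply le_antisymm
  · -- commutator ≤ H : the quotient G ⧸ H is abelian
    have hρtop : Subgroup.closure (Set.range ρ) = ⊤ := PresentedGroup.closure_range_of Wrels
    have hquot : ∀ x y : G ⧸ H, Commute x y := by
      apply aux_commute_all (s := Set.range ((QuotientGroup.mk' H) ∘ ρ))
      · rw [Set.range_comp, ← MonoidHom.map_closure, hρtop]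
        exact Subgroup.map_top_of_surjective _ (QuotientGroup.mk'_surjective H)
      · rintro x ⟨i, rfl⟩ y ⟨j, rfl⟩
        show Commute ((QuotientGroup.mk' H) (ρ i)) ((QuotientGroup.mk' H) (ρ j))
        rw [← commutatorElement_eq_one_iff_commute, ← map_commutatorElement]
        refine (QuotientGroup.eq_one_iff _).mpr ?_
        have mem_of_eq : ∀ {u : G}, u ∈ H → ∀ {v : G}, v = u → v ∈ H := by
          rintro u hu v rfl; exact hu
        fin_cases i <;> fin_cases j
        · show ⁅ρ 0, ρ 0⁆ ∈ H
          exact mem_of_eq (one_mem H) (by group)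
        · show ⁅ρ 0, ρ 1⁆ ∈ H
          exact mem_of_eq hAH (by rw [hA]; simp [commutatorElement_def, hinv])
        · show ⁅ρ 0, ρ 2⁆ ∈ H
          exact mem_of_eq (one_mem H)
            (by simp [commutatorElement_def, hinv, mul_assoc, hc', hsq, hsq'])
        · show ⁅ρ 1, ρ 0⁆ ∈ H
          exact mem_of_eq (inv_mem hAH)
            (by rw [hA]; simp [commutatorElement_def, hinv, mul_inv_rev, mul_assoc])
        · show ⁅ρ 1, ρ 1⁆ ∈ H
          exact mem_of_eq (one_mem H) (by group)
        · show ⁅ρ 1, ρ 2⁆ ∈ H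
          exact mem_of_eq hBH (by rw [hB]; simp [commutatorElement_def, hinv])
        · show ⁅ρ 2, ρ 0⁆ ∈ H
          exact mem_of_eq (one_mem H)
            (by simp [commutatorElement_def, hinv, mul_assoc, hc', hsq, hsq'])
        · show ⁅ρ 2, ρ 1⁆ ∈ H
          exact mem_of_eq (inv_mem hBH)
            (by rw [hB]; simp [commutatorElement_def, hinv, mul_inv_rev, mul_assoc])
        · show ⁅ρ 2, ρ 2⁆ ∈ H
          exact mem_of_eq (one_mem H) (by group)
    rw [commutator_def, Subgroup.commutator_le]
    intro g1 _ g2 _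
    have h1 : (QuotientGroup.mk' H) ⁅g1, g2⁆ = 1 := by
      rw [map_commutatorElement]
      exact commutatorElement_eq_one_iff_commute.mpr (hquot _ _)
    exact (QuotientGroup.eq_one_iff _).mp h1
  · -- H ≤ commutator
    rw [hH, Subgroup.closure_le]
    have hinA : A ∈ commutator G := by
      have e : A = ⁅(ρ 0)⁻¹, (ρ 1)⁻¹⁆ := by
        rw [hA]; simp [commutatorElement_def, hinv]
      rw [e, commutator_def]
      exact Subgroup.commutator_mem_commutator (Subgroup.mem_top _) (Subgroup.mem_top _)
    rintro x (rfl | rfl | rfl)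
    · exact hinA
    · have e : B = ⁅(ρ 1)⁻¹, (ρ 2)⁻¹⁆ := by
        rw [hB]; simp [commutatorElement_def, hinv]
      rw [e, commutator_def]
      exact Subgroup.commutator_mem_commutator (Subgroup.mem_top _) (Subgroup.mem_top _)
    · have h2 := (Subgroup.commutator_normal (⊤ : Subgroup G) ⊤).conj_mem A
        (by rwa [commutator_def] at hinA) (ρ 2)⁻¹
      rw [inv_inv] at h2
      rw [hC, commutator_def]
      exact h2
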